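/- Suppose G is a connected graph with λ₂(G) ≤ 1 which has neither K₅ nor K_{3,3} as a minor and whose girth equals 5, and let x₁x₂x₃x₄x₅x₁ be a 5-cycle in G. Then for each i ∈ {1,…,5}, there is at most one vertex v outside the cycle whose neighborhood on the cycle is exactly {x_i}; that is, |T_{x_i}| ≤ 1 where T_{x_i} = {v ∉ {x₁,…,x₅} : N(v) ∩ {x₁,…,x₅} = {x_i}}. -/

import Mathlib

open Matrix Finset

lemma spectral_bound {V : Type*} [Fintype V] [DecidableEq V]
    (A : Matrix V V ℝ) (hA : A.IsHermitian)
    [DecidablePred fun i => 1 < hA.eigenvalues i]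
    (hcard : (Finset.univ.filter fun i => 1 < hA.eigenvalues i).card ≤ 1)
    (y₁ y₂ : V → ℝ)
    (hpos : ∀ c₁ c₂ : ℝ, ¬(c₁ = 0 ∧ c₂ = 0) →
      (c₁ • y₁ + c₂ • y₂) ⬝ᵥ (c₁ • y₁ + c₂ • y₂) <
      (c₁ • y₁ + c₂ • y₂) ⬝ᵥ (A *ᵥ (c₁ • y₁ + c₂ • y₂))) : False := by
  classical
  set U : Matrix V V ℝ := (hA.eigenvectorUnitary : Matrix V V ℝ) with hUdef
  have hstar : star U = Uᵀ := by
    rw [Matrix.star_eq_conjTranspose, Matrix.conjTranspose_eq_transpose_of_trivial]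
  have hUU : U * star U = 1 := mem_unitaryGroup_iff.mp (hA.eigenvectorUnitary).2
  have key : ∀ y z : V → ℝ, y ⬝ᵥ (U *ᵥ z) = (star U *ᵥ y) ⬝ᵥ z := by
    intro y z
    rw [dotProduct_mulVec, hstar, mulVec_transpose]
  set S := Finset.univ.filter fun i => 1 < hA.eigenvalues i with hS
  obtain ⟨c₁, c₂, hne, hkill⟩ :
      ∃ c₁ c₂ : ℝ, ¬(c₁ = 0 ∧ c₂ = 0) ∧
        ∀ i ∈ S, (star U *ᵥ (c₁ • y₁ + c₂ • y₂)) i = 0 := by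
    rcases S.eq_empty_or_nonempty with h | ⟨i₀, hi₀⟩
    · exact ⟨1, 0, by simp, by simp [h]⟩
    · have hsingle : ∀ j ∈ S, j = i₀ := fun j hj => Finset.card_le_one.mp hcard j hj i₀ hi₀
      set a := (star U *ᵥ y₁) i₀ with ha
      set b := (star U *ᵥ y₂) i₀ with hb
      by_cases h0 : a = 0
      · refine ⟨1, 0, by simp, fun i hi => ?_⟩
        have := hsingle i hi
        subst this
        simp [mulVec_add, mulVec_smul, ← ha, ← hb, h0]
      · refine ⟨b, -a, fun h => h0 (by simpa using h.2), fun i hi => ?_⟩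
        have := hsingle i hi
        subst this
        simp [mulVec_add, mulVec_smul, Matrix.mulVec_neg, ← ha, ← hb]
        ring
  set w := c₁ • y₁ + c₂ • y₂ with hw
  set d := star U *ᵥ w with hd
  have h1 : w ⬝ᵥ (A *ᵥ w) = ∑ i, hA.eigenvalues i * (d i * d i) := by
    conv_lhs => rw [hA.spectral_theorem, Unitary.conjStarAlgAut_apply]
    rw [← mulVec_mulVec, ← mulVec_mulVec, key]
    have : (Matrix.diagonal (RCLike.ofReal ∘ hA.eigenvalues) *ᵥ (star U *ᵥ w)) =
        fun i => hA.eigenvalues i * d i := by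
      funext i
      rw [mulVec_diagonal]
      simp [hd]
    rw [this, dotProduct]
    congr 1; funext i; ring
  have h2 : w ⬝ᵥ w = ∑ i, d i * d i := by
    conv_lhs => rw [show w ⬝ᵥ w = w ⬝ᵥ (1 *ᵥ w) by rw [one_mulVec], ← hUU,
      ← mulVec_mulVec, key]
    rfl
  have hle : ∑ i, hA.eigenvalues i * (d i * d i) ≤ ∑ i, d i * d i := by
    apply Finset.sum_le_sum
    intro i _
    by_cases hiS : i ∈ S
    · rw [hkill i hiS]
      simp
    · have : hA.eigenvalues i ≤ 1 := by
        by_contra h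
        exact hiS (Finset.mem_filter.mpr ⟨Finset.mem_univ _, lt_of_not_ge h⟩)
      nlinarith [mul_self_nonneg (d i)]
  have := hpos c₁ c₂ hne
  rw [← hw] at this
  linarith [h1 ▸ h2 ▸ this]

lemma sum_dotProduct' {ι V : Type*} [Fintype ι] [Fintype V] (g : ι → V → ℝ) (w : V → ℝ) :
    (∑ k, g k) ⬝ᵥ w = ∑ k, (g k) ⬝ᵥ w := by
  simp only [dotProduct, Finset.sum_apply, Finset.sum_mul]
  rw [Finset.sum_comm]

lemma dotProduct_sum' {ι V : Type*} [Fintype ι] [Fintype V] (g : ι → V → ℝ) (w : V → ℝ) :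
    w ⬝ᵥ (∑ k, g k) = ∑ k, w ⬝ᵥ (g k) := by
  simp only [dotProduct, Finset.sum_apply, Finset.mul_sum]
  rw [Finset.sum_comm]

lemma no_triangle {V : Type*} (G : SimpleGraph V) (hg : G.egirth = 5) {a b c : V}
    (hab : G.Adj a b) (hbc : G.Adj b c) (hca : G.Adj c a) : False := by
  have hne1 : a ≠ b := hab.ne
  have hne2 : b ≠ c := hbc.ne
  have hne3 : c ≠ a := hca.ne
  set w : G.Walk a a := .cons hab (.cons hbc (.cons hca .nil)) with hw
  have hcyc : w.IsCycle := by
    constructor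
    · constructor
      · rw [SimpleGraph.Walk.isTrail_def]
        simp [hw, Sym2.eq_iff]
        tauto
      · simp [hw]
    · simp [hw]
      tauto
  have h5 : (5 : ℕ∞) ≤ G.egirth := le_of_eq hg.symm
  have := (SimpleGraph.le_egirth.mp h5) a w hcyc
  rw [hw] at this
  norm_num [SimpleGraph.Walk.length_cons] at this


/-- The adjacency matrix of a simple graph over `ℝ` is Hermitian. -/
lemma adjMatrix_isHermitian {V : Type*} [Fintype V] (G : SimpleGraph V)
    [DecidableRel G.Adj] : ((G.adjMatrix ℝ)).IsHermitian := by
  rw [Matrix.IsHermitian, Matrix.conjTranspose_eq_transpose_of_trivial]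
  exact G.isSymm_adjMatrix

/-- The number of eigenvalues (counted with multiplicity) of the real adjacency matrix of `G`
satisfying the predicate `p`. -/
noncomputable def eigCount {V : Type*} [Fintype V] [DecidableEq V]
    (G : SimpleGraph V) (p : ℝ → Prop) : ℕ := by
  classical
  exact (Finset.univ.filter fun i =>
    p ((adjMatrix_isHermitian G).eigenvalues i)).card
/-- `HasMinor G H` : `H` is a minor of `G`, witnessed by a family of pairwise disjoint
nonempty branch sets, each inducing a connected subgraph of `G`, such that every edge of `H`
is realized by an edge of `G` between the corresponding branch sets. -/
def HasMinor {V : Type*} {W : Type*} (G : SimpleGraph V) (H : SimpleGraph W) : Prop :=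
  ∃ B : W → Set V,
    (∀ w, (B w).Nonempty) ∧
    (Pairwise fun w₁ w₂ => Disjoint (B w₁) (B w₂)) ∧
    (∀ w, (G.induce (B w)).Connected) ∧
    (∀ ⦃w₁ w₂⦄, H.Adj w₁ w₂ → ∃ a ∈ B w₁, ∃ b ∈ B w₂, G.Adj a b)

/-- `G` is planar in the sense of Wagner: it has neither `K₅` nor `K_{3,3}` as a minor. -/
def WagnerPlanar {V : Type*} (G : SimpleGraph V) : Prop :=
  ¬ HasMinor G (⊤ : SimpleGraph (Fin 5)) ∧
    ¬ HasMinor G (completeBipartiteGraph (Fin 3) (Fin 3))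

/-- concrete 7×7 adjacency pattern: `C₅` plus two pendants at vertex `0`. -/
def Mmat : Fin 7 → Fin 7 → ℝ :=
  ![![0,1,0,0,1,1,1], ![1,0,1,0,0,0,0], ![0,1,0,1,0,0,0], ![0,0,1,0,1,0,0],
    ![1,0,0,1,0,0,0], ![1,0,0,0,0,0,0], ![1,0,0,0,0,0,0]]

def pvec : Fin 7 → ℝ := ![58, 40, 32, 32, 40, 26, 26]
def qvec : Fin 7 → ℝ := ![-41, 10, 53, 53, 10, -35, -35]

lemma quad_ident (c₁ c₂ : ℝ) :
    (∑ k, ∑ l, (c₁ • pvec + c₂ • qvec) k * (c₁ • pvec + c₂ • qvec) l * Mmat k l)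
      - (∑ k, (c₁ • pvec + c₂ • qvec) k * (c₁ • pvec + c₂ • qvec) k)
    = 12516*c₁^2 - 68*c₁*c₂ + 1889*c₂^2 := by
  simp only [pvec, qvec, Mmat, Fin.sum_univ_seven, Pi.add_apply, Pi.smul_apply, smul_eq_mul,
    show (5:Fin 7) = (4:Fin 6).succ from rfl, show (6:Fin 7) = (5:Fin 6).succ from rfl,
    show (5:Fin 6) = (4:Fin 5).succ from rfl, Matrix.cons_val_succ, Matrix.cons_val_zero,
    Matrix.cons_val_one, Matrix.head_cons, Matrix.cons_val_two, Matrix.cons_val_three,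
    Matrix.cons_val_four, Matrix.vecTail, Matrix.vecHead, Function.comp]
  norm_num
  ring

lemma quad_pos (c₁ c₂ : ℝ) (hc : ¬(c₁ = 0 ∧ c₂ = 0)) :
    0 < 12516*c₁^2 - 68*c₁*c₂ + 1889*c₂^2 := by
  by_cases h2 : c₂ = 0
  · subst h2
    have h1 : c₁ ≠ 0 := fun h => hc ⟨h, rfl⟩
    have : 0 < c₁^2 := by positivity
    nlinarith
  · have : 0 < c₂^2 := by positivity
    nlinarith [sq_nonneg (12516*c₁ - 34*c₂)]

/-- The analytic core: a graph containing an induced `C₅` plus two pendant vertices at a common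
cycle vertex has at least two adjacency eigenvalues exceeding `1`. -/
lemma core_contradiction {V : Type*} [Fintype V] [DecidableEq V]
    (G : SimpleGraph V) [DecidableRel G.Adj]
    [DecidablePred fun i => 1 < (adjMatrix_isHermitian G).eigenvalues i]
    (hcard : (Finset.univ.filter fun i => 1 < (adjMatrix_isHermitian G).eigenvalues i).card ≤ 1)
    (f : Fin 7 → V) (hfinj : Function.Injective f)
    (hM : ∀ k l : Fin 7, (G.adjMatrix ℝ) (f k) (f l) = Mmat k l) : False := by
  set y : (Fin 7 → ℝ) → (V → ℝ) := fun c => ∑ k : Fin 7, c k • (Pi.single (f k) 1 : V → ℝ)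
    with hy
  have mulVec_sum' : ∀ (g : Fin 7 → V → ℝ),
      G.adjMatrix ℝ *ᵥ (∑ k, g k) = ∑ k, G.adjMatrix ℝ *ᵥ g k := by
    intro g
    funext a
    simp only [Matrix.mulVec, dotProduct, Finset.sum_apply, Finset.mul_sum]
    rw [Finset.sum_comm]
  have hdotA : ∀ c c' : Fin 7 → ℝ,
      (y c) ⬝ᵥ (G.adjMatrix ℝ *ᵥ (y c')) = ∑ k, ∑ l, c k * c' l * Mmat k l := by
    intro c c'
    rw [hy]
    simp only [Matrix.mulVec_smul, mulVec_sum']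
    rw [sum_dotProduct']
    refine Finset.sum_congr rfl fun k _ => ?_
    rw [smul_dotProduct, dotProduct_sum']
    rw [Finset.smul_sum]
    refine Finset.sum_congr rfl fun l _ => ?_
    rw [dotProduct_smul, Matrix.mulVec_single, single_dotProduct]
    simp only [mul_one, one_mul, smul_eq_mul]
    simp only [Pi.smul_apply, op_smul_eq_smul, one_smul, Matrix.col_apply]
    rw [hM k l]
    ring
  have hdotI : ∀ c c' : Fin 7 → ℝ,
      (y c) ⬝ᵥ (y c') = ∑ k, c k * c' k := by
    intro c c'
    rw [hy]
    rw [sum_dotProduct']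
    refine Finset.sum_congr rfl fun k _ => ?_
    rw [smul_dotProduct, dotProduct_sum']
    rw [Finset.smul_sum]
    have hterm : ∀ l, c k • (c' l • (Pi.single (f k) (1:ℝ) ⬝ᵥ Pi.single (f l) 1))
        = (if l = k then c k * c' l else 0) := by
      intro l
      by_cases h : l = k
      · subst h
        simp [single_dotProduct, Pi.single_apply, smul_eq_mul]
      · have hne : f l ≠ f k := fun e => h (hfinj e)
        simp [single_dotProduct, Pi.single_apply, hne, h]
    simp only [dotProduct_smul, smul_eq_mul] at hterm ⊢
    calc ∑ l, c k * (c' l * (Pi.single (f k) (1:ℝ) ⬝ᵥ Pi.single (f l) 1))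
        = ∑ l, (if l = k then c k * c' l else 0) := by
          refine Finset.sum_congr rfl fun l _ => ?_
          have := hterm l
          simpa [smul_eq_mul] using this
      _ = c k * c' k := by rw [Finset.sum_ite_eq' Finset.univ k fun l => c k * c' l]; simp
  have hlin : ∀ c₁ c₂ : ℝ, c₁ • y pvec + c₂ • y qvec = y (c₁ • pvec + c₂ • qvec) := by
    intro c₁ c₂
    rw [hy]
    simp only [Finset.smul_sum, ← Finset.sum_add_distrib, smul_smul]
    refine Finset.sum_congr rfl fun k _ => ?_
    simp [add_smul, smul_smul, Pi.add_apply, Pi.smul_apply, smul_eq_mul]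
  have hpos : ∀ c₁ c₂ : ℝ, ¬(c₁ = 0 ∧ c₂ = 0) →
      (c₁ • y pvec + c₂ • y qvec) ⬝ᵥ (c₁ • y pvec + c₂ • y qvec) <
      (c₁ • y pvec + c₂ • y qvec) ⬝ᵥ (G.adjMatrix ℝ *ᵥ (c₁ • y pvec + c₂ • y qvec)) := by
    intro c₁ c₂ hc
    rw [hlin, hdotA, hdotI]
    have h1 := quad_ident c₁ c₂
    have h2 := quad_pos c₁ c₂ hc
    linarith
  exact spectral_bound (G.adjMatrix ℝ) (adjMatrix_isHermitian G) hcard (y pvec) (y qvec) hpos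
set_option maxHeartbeats 1000000 in
/-- under the girth-5 setting with 5-cycle `x₀x₁x₂x₃x₄x₀`, for each `i` there
is at most one vertex outside the cycle whose neighborhood on the cycle is exactly `{x i}`,
i.e. `|T_{x_i}| ≤ 1`. -/
theorem girth_five_T_single_subsingleton {V : Type*} [Fintype V] [DecidableEq V]
    (G : SimpleGraph V) (hconn : G.Connected) (hl : eigCount G (fun t => 1 < t) ≤ 1)
    (hplanar : WagnerPlanar G) (hgirth : G.egirth = 5)
    (x : Fin 5 → V) (hinj : Function.Injective x) (hcyc : ∀ i, G.Adj (x i) (x (i + 1))) :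
    ∀ i : Fin 5, ∀ u v : V,
      u ∉ Set.range x → (∀ j, G.Adj u (x j) ↔ j = i) →
      v ∉ Set.range x → (∀ j, G.Adj v (x j) ↔ j = i) → u = v := by
  classical
  intro i u v hu hui hv hvi
  by_contra hne
  have htri : ∀ {a b c : V}, G.Adj a b → G.Adj b c → G.Adj c a → False :=
    fun hab hbc hca => no_triangle G hgirth hab hbc hca
  set f : Fin 7 → V := ![x i, x (i+1), x (i+2), x (i+3), x (i+4), u, v] with hf
  set M : Fin 7 → Fin 7 → ℝ :=
    ![![0,1,0,0,1,1,1], ![1,0,1,0,0,0,0], ![0,1,0,1,0,0,0], ![0,0,1,0,1,0,0],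
      ![1,0,0,1,0,0,0], ![1,0,0,0,0,0,0], ![1,0,0,0,0,0,0]] with hMdef
  -- adjacency facts
  have hN2 : ∀ a : Fin 5, ¬ G.Adj (x a) (x (a+2)) := by
    intro a h
    refine htri (hcyc a) ?_ h.symm
    have := hcyc (a+1)
    rwa [show a+1+1 = a+2 by rw [add_assoc]; norm_num; decide] at this
  have e12 : G.Adj (x (i+1)) (x (i+2)) := by
    have := hcyc (i+1); rwa [show i+1+1 = i+2 by rw [add_assoc]; norm_num; decide] at this
  have e23 : G.Adj (x (i+2)) (x (i+3)) := by
    have := hcyc (i+2); rwa [show i+2+1 = i+3 by rw [add_assoc]; norm_num; decide] at this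
  have e34 : G.Adj (x (i+3)) (x (i+4)) := by
    have := hcyc (i+3); rwa [show i+3+1 = i+4 by rw [add_assoc]; norm_num; decide] at this
  have e40 : G.Adj (x (i+4)) (x i) := by
    have := hcyc (i+4)
    rwa [show i+4+1 = i by rw [add_assoc, show (4:Fin 5)+1 = 0 by decide, add_zero]] at this
  have n02 : ¬ G.Adj (x i) (x (i+2)) := hN2 i
  have n13 : ¬ G.Adj (x (i+1)) (x (i+3)) := by
    have := hN2 (i+1); rwa [show i+1+2 = i+3 by rw [add_assoc]; norm_num; decide] at this
  have n24 : ¬ G.Adj (x (i+2)) (x (i+4)) := by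
    have := hN2 (i+2); rwa [show i+2+2 = i+4 by rw [add_assoc]; norm_num; decide] at this
  have n03 : ¬ G.Adj (x i) (x (i+3)) := by
    intro h
    have := hN2 (i+3)
    rw [show i+3+2 = i by rw [add_assoc, show (3:Fin 5)+2 = 0 by decide, add_zero]] at this
    exact this h.symm
  have n14 : ¬ G.Adj (x (i+1)) (x (i+4)) := by
    intro h
    have := hN2 (i+4)
    rw [show i+4+2 = i+1 by rw [add_assoc, show (4:Fin 5)+2 = (1:Fin 5) by decide]] at this
    exact this h.symm
  have hidx : ∀ k : Fin 5, k ≠ 0 → ¬ (i + k = i) := by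
    intro k hk h
    apply hk
    have h' : i + k = i + 0 := by rwa [add_zero]
    exact add_left_cancel h'
  have hu0 : G.Adj u (x i) := (hui i).mpr rfl
  have hv0 : G.Adj v (x i) := (hvi i).mpr rfl
  have hun : ∀ k : Fin 5, k ≠ 0 → ¬ G.Adj u (x (i+k)) := fun k hk h => hidx k hk ((hui _).mp h)
  have hvn : ∀ k : Fin 5, k ≠ 0 → ¬ G.Adj v (x (i+k)) := fun k hk h => hidx k hk ((hvi _).mp h)
  have huv : ¬ G.Adj u v := fun h => htri h hv0 hu0.symm
  have e01 := hcyc i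
  have nsym : ∀ {a b : V}, ¬ G.Adj a b → ¬ G.Adj b a := fun h h' => h h'.symm
  have hM : ∀ k l : Fin 7, (G.adjMatrix ℝ) (f k) (f l) = M k l := by
    intro k l
    fin_cases k <;> fin_cases l <;>
      simp [hf, hMdef, SimpleGraph.adjMatrix_apply,
        show (5:Fin 7) = (4:Fin 6).succ from rfl, show (6:Fin 7) = (5:Fin 6).succ from rfl,
        show (5:Fin 6) = (4:Fin 5).succ from rfl, Matrix.cons_val_succ,
        e01.symm, e12.symm, e23.symm, e34.symm, e40.symm, hu0.symm, hv0.symm,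
        nsym n02, nsym n13, nsym n24, nsym n03, nsym n14, nsym huv,
        nsym (hun 1 (by decide)), nsym (hun 2 (by decide)), nsym (hun 3 (by decide)),
        nsym (hun 4 (by decide)),
        nsym (hvn 1 (by decide)), nsym (hvn 2 (by decide)), nsym (hvn 3 (by decide)),
        nsym (hvn 4 (by decide)),
        hcyc i, e12, e23, e34, e40, n02, n13, n24, n03, n14, hu0, hv0, huv,
        hun 1 (by decide), hun 2 (by decide), hun 3 (by decide), hun 4 (by decide),
        hvn 1 (by decide), hvn 2 (by decide), hvn 3 (by decide), hvn 4 (by decide)]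
      <;> (try rfl)
  -- injectivity of f
  have xne : ∀ a b : Fin 5, ¬ a = b → ¬ x (i+a) = x (i+b) := by
    intro a b h e
    exact h (add_left_cancel (hinj e))
  have x0ne : ∀ b : Fin 5, b ≠ 0 → ¬ x i = x (i+b) := fun b hb e => hidx b hb (hinj e).symm
  have x0ne' : ∀ b : Fin 5, b ≠ 0 → ¬ x (i+b) = x i := fun b hb e => hidx b hb (hinj e)
  have hxu0 : ¬ x i = u := fun e => hu ⟨i, e⟩
  have hxv0 : ¬ x i = v := fun e => hv ⟨i, e⟩
  have hxu : ∀ a : Fin 5, ¬ x (i+a) = u := fun a e => hu ⟨i+a, e⟩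
  have hxv : ∀ a : Fin 5, ¬ x (i+a) = v := fun a e => hv ⟨i+a, e⟩
  have hux0 : ¬ u = x i := fun e => hxu0 e.symm
  have hvx0 : ¬ v = x i := fun e => hxv0 e.symm
  have hux1 : ¬ u = x (i+1) := fun e => hxu 1 e.symm
  have hux2 : ¬ u = x (i+2) := fun e => hxu 2 e.symm
  have hux3 : ¬ u = x (i+3) := fun e => hxu 3 e.symm
  have hux4 : ¬ u = x (i+4) := fun e => hxu 4 e.symm
  have hvx1 : ¬ v = x (i+1) := fun e => hxv 1 e.symm
  have hvx2 : ¬ v = x (i+2) := fun e => hxv 2 e.symm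
  have hvx3 : ¬ v = x (i+3) := fun e => hxv 3 e.symm
  have hvx4 : ¬ v = x (i+4) := fun e => hxv 4 e.symm
  have hvu : ¬ v = u := fun e => hne e.symm
  have hfinj : Function.Injective f := by
    intro k l h
    fin_cases k <;> fin_cases l <;> rw [hf] at h <;> first
      | rfl
      | (exfalso; revert h;
         simp [show (5:Fin 7) = (4:Fin 6).succ from rfl, show (6:Fin 7) = (5:Fin 6).succ from rfl,
           show (5:Fin 6) = (4:Fin 5).succ from rfl, Matrix.cons_val_succ,
           x0ne 1 (by decide), x0ne 2 (by decide), x0ne 3 (by decide), x0ne 4 (by decide),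
           x0ne' 1 (by decide), x0ne' 2 (by decide), x0ne' 3 (by decide), x0ne' 4 (by decide),
           hxu0, hxv0, hux0, hvx0,
           xne 1 2 (by decide), xne 1 3 (by decide), xne 1 4 (by decide),
           xne 2 1 (by decide), xne 2 3 (by decide), xne 2 4 (by decide),
           xne 3 1 (by decide), xne 3 2 (by decide), xne 3 4 (by decide),
           xne 4 1 (by decide), xne 4 2 (by decide), xne 4 3 (by decide),
           hxu 1, hxu 2, hxu 3, hxu 4, hxv 1, hxv 2, hxv 3, hxv 4,
           hux1, hux2, hux3, hux4, hvx1, hvx2, hvx3, hvx4,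
           hne, hvu])
  -- bridge eigCount and conclude
  have hcard : (Finset.univ.filter fun j => 1 < (adjMatrix_isHermitian G).eigenvalues j).card ≤ 1 := by
    have heq : eigCount G (fun t => 1 < t)
        = (Finset.univ.filter fun j => 1 < (adjMatrix_isHermitian G).eigenvalues j).card := by
      unfold eigCount
      congr!
    omega
  exact core_contradiction G hcard f hfinj hM
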